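/- With φ_{q,ℓ}, φ_{q,0}, φ_{0,ℓ} as defined below, define h = Σ_{α=1}^{p} Σ_{μ=p+1}^{p+q} (z_μ·∂_α ⊗ A*(ω_{α,μ}) ⊗ 1). Then (p+q−1) · (h φ_{q,ℓ}) = (p+q+ℓ−1) · ((h φ_{q,0}) · φ_{0,ℓ}), where the product on the right multiplies the polynomial factors, wedges the exterior-algebra factors, and retains the tensor factor. Equivalently, the form ψ_{q,ℓ} := (−1/(2(p+q−1))) (h φ_{q,0}) · φ_{0,ℓ} equals (−1/(2(p+q+ℓ−1))) h φ_{q,ℓ}. -/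

import Mathlib

open scoped TensorProduct
open Finset

noncomputable section

namespace FockModel

/-- The polynomial algebra `ℂ[z_1, …, z_{p+q}]` (Fock model, `n = 1`). -/
abbrev P (p q : ℕ) := MvPolynomial (Fin (p + q)) ℂ

/-- The vector space with basis `{ω_{α,μ}}` indexed by pairs of a positive and a
negative index. -/
abbrev Om (p q : ℕ) := (Fin p × Fin q) → ℂ

/-- The exterior algebra on the `ω_{α,μ}`. -/
abbrev E (p q : ℕ) := ExteriorAlgebra ℂ (Om p q)

/-- `ℂ^{p+q}`. -/
abbrev Vc (p q : ℕ) := Fin (p + q) → ℂ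

/-- The `ℓ`-fold tensor power `T^ℓ = (ℂ^{p+q})^{⊗ℓ}`. -/
abbrev T (p q ℓ : ℕ) := ⨂[ℂ] (_ : Fin ℓ), Vc p q

/-- The ambient space `P ⊗ E ⊗ T^ℓ`. -/
abbrev F (p q ℓ : ℕ) := (P p q ⊗[ℂ] E p q) ⊗[ℂ] T p q ℓ

/-- The standard basis vector `e_i` of `ℂ^{p+q}`. -/
def e (p q : ℕ) (i : Fin (p + q)) : Vc p q := Pi.single i 1

/-- The basis vector `ω_{α,μ}` of the exterior algebra. -/
def ω (p q : ℕ) (α : Fin p) (μ : Fin q) : E p q :=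
  ExteriorAlgebra.ι ℂ (Pi.single (α, μ) 1)

/-- The contraction (interior product) `A*(ω_{α,μ})` on the exterior algebra:
the unique odd derivation sending `ω_{β,ν}` to `1` if `(β,ν) = (α,μ)` and to `0`
otherwise, realized as contraction against the dual basis element of `ω_{α,μ}`. -/
def contr (p q : ℕ) (α : Fin p) (μ : Fin q) : E p q →ₗ[ℂ] E p q :=
  CliffordAlgebra.contractLeft (Q := (0 : QuadraticForm ℂ (Om p q)))
    (LinearMap.proj (α, μ))

/-- The Schwartz form `φ_{q,ℓ}` in the Fock model. -/
def phi (p q ℓ : ℕ) : F p q ℓ :=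
  ((2 : ℂ) ^ ((q : ℂ) / 2) * (-Complex.I / (4 * (Real.pi : ℂ))) ^ (q + ℓ)) •
    ∑ a : Fin q → Fin p, ∑ b : Fin ℓ → Fin p,
      (((∏ k : Fin q, MvPolynomial.X (Fin.castAdd q (a k)) : P p q) *
          ∏ k : Fin ℓ, MvPolynomial.X (Fin.castAdd q (b k)))
        ⊗ₜ[ℂ] (List.ofFn fun μ : Fin q => ω p q (a μ) μ).prod)
      ⊗ₜ[ℂ] PiTensorProduct.tprod ℂ fun k : Fin ℓ => e p q (Fin.castAdd q (b k))

/-- The scalar-valued form `φ_{q,0}`, viewed in `P ⊗ E` (the trivial tensor factor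
`T^0` being dropped). -/
def phiQ0' (p q : ℕ) : P p q ⊗[ℂ] E p q :=
  ((2 : ℂ) ^ ((q : ℂ) / 2) * (-Complex.I / (4 * (Real.pi : ℂ))) ^ q) •
    ∑ a : Fin q → Fin p,
      (∏ k : Fin q, MvPolynomial.X (Fin.castAdd q (a k)) : P p q)
        ⊗ₜ[ℂ] (List.ofFn fun μ : Fin q => ω p q (a μ) μ).prod

/-- The form `φ_{0,ℓ}`. -/
def phi0 (p q ℓ : ℕ) : F p q ℓ :=
  ((-Complex.I / (4 * (Real.pi : ℂ))) ^ ℓ) •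
    ∑ b : Fin ℓ → Fin p,
      ((∏ k : Fin ℓ, MvPolynomial.X (Fin.castAdd q (b k)) : P p q) ⊗ₜ[ℂ] (1 : E p q))
        ⊗ₜ[ℂ] PiTensorProduct.tprod ℂ fun k : Fin ℓ => e p q (Fin.castAdd q (b k))

/-- `h = Σ_{α,μ} (z_μ·∂_α ⊗ A*(ω_{α,μ}) ⊗ 1)` acting on `P ⊗ E ⊗ T^ℓ`. -/
def hOp (p q ℓ : ℕ) : F p q ℓ →ₗ[ℂ] F p q ℓ :=
  ∑ α : Fin p, ∑ μ : Fin q,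
    TensorProduct.map
      (TensorProduct.map
        (LinearMap.mulLeft ℂ (MvPolynomial.X (Fin.natAdd p μ) : P p q) ∘ₗ
          (MvPolynomial.pderiv (Fin.castAdd q α)).toLinearMap)
        (contr p q α μ))
      LinearMap.id

/-- `h = Σ_{α,μ} (z_μ·∂_α ⊗ A*(ω_{α,μ}))` acting on `P ⊗ E`. -/
def hOp' (p q : ℕ) : P p q ⊗[ℂ] E p q →ₗ[ℂ] P p q ⊗[ℂ] E p q :=
  ∑ α : Fin p, ∑ μ : Fin q,
    TensorProduct.map
      (LinearMap.mulLeft ℂ (MvPolynomial.X (Fin.natAdd p μ) : P p q) ∘ₗ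
        (MvPolynomial.pderiv (Fin.castAdd q α)).toLinearMap)
      (contr p q α μ)


/-! ### Auxiliary machinery -/

section Contraction

variable {R M : Type*} [CommRing R] [AddCommGroup M] [Module R M]

lemma contr_ofFn_zero (d : Module.Dual R M) {n : ℕ} (v : Fin n → M)
    (h : ∀ ν, d (v ν) = 0) :
    CliffordAlgebra.contractLeft (Q := (0 : QuadraticForm R M)) d
      (List.ofFn fun ν => CliffordAlgebra.ι 0 (v ν)).prod = 0 := by
  induction n with
  | zero => simp [CliffordAlgebra.contractLeft_one]
  | succ n ih =>
    rw [List.ofFn_succ, List.prod_cons, CliffordAlgebra.contractLeft_ι_mul,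
      h, ih (fun ν => v ν.succ) (fun ν => h ν.succ)]
    simp

lemma contr_ofFn_single (d : Module.Dual R M) {n : ℕ} (μ : Fin (n+1)) (v : Fin (n+1) → M)
    (h : ∀ ν, ν ≠ μ → d (v ν) = 0) :
    CliffordAlgebra.contractLeft (Q := (0 : QuadraticForm R M)) d
      (List.ofFn fun ν => CliffordAlgebra.ι 0 (v ν)).prod
    = ((-1 : R) ^ (μ : ℕ) * d (v μ)) •
        (List.ofFn fun ν : Fin n => CliffordAlgebra.ι (0 : QuadraticForm R M) (v (μ.succAbove ν))).prod := by
  induction n with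
  | zero =>
    rw [List.ofFn_succ, List.ofFn_zero, List.prod_cons, List.prod_nil, mul_one,
      CliffordAlgebra.contractLeft_ι]
    have : μ = 0 := Fin.fin_one_eq_zero μ
    subst this
    simp [Algebra.algebraMap_eq_smul_one]
  | succ n ih =>
    rw [List.ofFn_succ, List.prod_cons, CliffordAlgebra.contractLeft_ι_mul]
    rcases Fin.eq_zero_or_eq_succ μ with rfl | ⟨μ', rfl⟩
    · rw [contr_ofFn_zero d (fun ν => v ν.succ) (fun ν => h ν.succ (Fin.succ_ne_zero ν))]
      simp [Fin.succAbove_zero, Function.comp_def]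
    · rw [h 0 (Fin.succ_ne_zero μ').symm, ih μ' (fun ν => v ν.succ)
        (fun ν hν => h ν.succ (by simpa [Fin.ext_iff] using fun hh => hν (Fin.ext hh)))]
      have hlist : (List.ofFn fun ν : Fin (n+1) => (CliffordAlgebra.ι (0 : QuadraticForm R M)) (v (μ'.succ.succAbove ν)))
          = (CliffordAlgebra.ι (0 : QuadraticForm R M)) (v 0)
            :: List.ofFn fun ν : Fin n => (CliffordAlgebra.ι (0 : QuadraticForm R M)) (v ((μ'.succAbove ν).succ)) := by
        rw [List.ofFn_succ]
        simp [Fin.succ_succAbove_succ]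
      rw [hlist, List.prod_cons]
      simp only [zero_smul, zero_sub, mul_smul_comm, Fin.val_succ, pow_succ]
      rw [← neg_smul]
      ring_nf

end Contraction

/-- The monomial `∏ X_{g k}` on positive variables. -/
def Pmon (p q : ℕ) {m : ℕ} (g : Fin m → Fin p) : P p q :=
  ∏ k, MvPolynomial.X (Fin.castAdd q (g k))

/-- The basic tensor `e_{b 0} ⊗ ⋯ ⊗ e_{b (ℓ-1)}`. -/
def eB (p q ℓ : ℕ) (b : Fin ℓ → Fin p) : T p q ℓ :=
  PiTensorProduct.tprod ℂ fun k => e p q (Fin.castAdd q (b k))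

/-- The wedge `ω_{a 0,0} ∧ ⋯ ∧ ω_{a (q-1),q-1}`. -/
def Wl (p q : ℕ) (a : Fin q → Fin p) : E p q :=
  (List.ofFn fun μ => ω p q (a μ) μ).prod

/-- The wedge with the `μ`-th slot removed. -/
def Wc (p q' : ℕ) (μ : Fin (q'+1)) (c : Fin q' → Fin p) : E p (q'+1) :=
  (List.ofFn fun ν => ω p (q'+1) (c ν) (μ.succAbove ν)).prod

lemma contr_Wl (p q' : ℕ) (α : Fin p) (μ : Fin (q'+1)) (a : Fin (q'+1) → Fin p) :
    contr p (q'+1) α μ (Wl p (q'+1) a)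
      = (if a μ = α then ((-1:ℂ)^(μ:ℕ)) else 0) • Wc p q' μ (fun ν => a (μ.succAbove ν)) := by
  rw [contr, Wl]
  simp only [ω, ExteriorAlgebra.ι]
  have key := contr_ofFn_single (R := ℂ) (M := Om p (q'+1)) (LinearMap.proj (α, μ)) μ
    (fun ν => Pi.single (a ν, ν) 1)
    (fun ν hν => by
      simp only [LinearMap.proj_apply, Pi.single_apply]
      rw [if_neg]
      exact fun hc => hν (by simpa using (congrArg Prod.snd hc).symm))
  rw [key]
  simp only [LinearMap.proj_apply, Pi.single_apply, Wc]
  rcases eq_or_ne (a μ) α with hm | hm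
  · rw [if_pos (by simp [hm]), if_pos hm, mul_one]
    rfl
  · rw [if_neg (by simp [Prod.ext_iff, Ne.symm hm]), if_neg hm, mul_zero, zero_smul, zero_smul]


lemma pderiv_X_pos (p q : ℕ) (β γ : Fin p) :
    (MvPolynomial.pderiv (Fin.castAdd q β)) (MvPolynomial.X (Fin.castAdd q γ) : P p q)
      = if γ = β then 1 else 0 := by
  rcases eq_or_ne γ β with rfl | h
  · simp
  · rw [if_neg h, MvPolynomial.pderiv_X_of_ne]
    exact fun hc => h (by simpa [Fin.ext_iff] using hc)

lemma euler (p q : ℕ) {m : ℕ} (g : Fin m → Fin p) :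
    ∑ β : Fin p, MvPolynomial.X (Fin.castAdd q β) *
        (MvPolynomial.pderiv (Fin.castAdd q β)) (Pmon p q g)
      = (m : ℂ) • Pmon p q g := by
  induction m with
  | zero => simp [Pmon, MvPolynomial.pderiv_one]
  | succ m ih =>
    have hP : Pmon p q g
        = MvPolynomial.X (Fin.castAdd q (g 0)) * Pmon p q (fun k => g k.succ) := by
      rw [Pmon, Fin.prod_univ_succ]; rfl
    rw [hP]
    simp only [MvPolynomial.pderiv_mul, pderiv_X_pos, mul_add, ite_mul, one_mul, zero_mul,
      mul_ite, mul_zero]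
    rw [Finset.sum_add_distrib, Finset.sum_ite_eq Finset.univ (g 0)
      (fun β => MvPolynomial.X (Fin.castAdd q β) * Pmon p q (fun k => g k.succ)),
      if_pos (Finset.mem_univ _)]
    have h2 : ∑ β : Fin p, MvPolynomial.X (Fin.castAdd q β) *
        (MvPolynomial.X (Fin.castAdd q (g 0)) *
          (MvPolynomial.pderiv (Fin.castAdd q β)) (Pmon p q (fun k => g k.succ)))
        = MvPolynomial.X (Fin.castAdd q (g 0)) * ((m : ℂ) • Pmon p q (fun k => g k.succ)) := by
      rw [← ih, Finset.mul_sum]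
      exact Finset.sum_congr rfl fun β _ => by ring
    rw [h2, mul_smul_comm, Nat.cast_succ, add_smul, one_smul, add_comm]

lemma keypoly (p q : ℕ) {m m' : ℕ} (c : Fin m → Fin p) (bb : Fin m' → Fin p) :
    ∑ β : Fin p, (MvPolynomial.pderiv (Fin.castAdd q β))
        (MvPolynomial.X (Fin.castAdd q β) * Pmon p q c * Pmon p q bb)
      = ((p : ℂ) + m + m') • (Pmon p q c * Pmon p q bb) := by
  simp only [MvPolynomial.pderiv_mul, MvPolynomial.pderiv_X_self, one_mul, add_mul]
  rw [Finset.sum_add_distrib, Finset.sum_add_distrib]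
  have h1 : ∑ _β : Fin p, Pmon p q c * Pmon p q bb = (p : ℂ) • (Pmon p q c * Pmon p q bb) := by
    rw [Finset.sum_const, Finset.card_univ, Fintype.card_fin, Nat.cast_smul_eq_nsmul]
  have h2 : ∑ β : Fin p, MvPolynomial.X (Fin.castAdd q β) *
        (MvPolynomial.pderiv (Fin.castAdd q β)) (Pmon p q c) * Pmon p q bb
      = (m : ℂ) • (Pmon p q c * Pmon p q bb) := by
    rw [← Finset.sum_mul, euler, smul_mul_assoc]
  have h3 : ∑ β : Fin p, MvPolynomial.X (Fin.castAdd q β) * Pmon p q c *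
        (MvPolynomial.pderiv (Fin.castAdd q β)) (Pmon p q bb)
      = (m' : ℂ) • (Pmon p q c * Pmon p q bb) := by
    have : ∀ β : Fin p, MvPolynomial.X (Fin.castAdd q β) * Pmon p q c *
          (MvPolynomial.pderiv (Fin.castAdd q β)) (Pmon p q bb)
        = Pmon p q c * (MvPolynomial.X (Fin.castAdd q β) *
            (MvPolynomial.pderiv (Fin.castAdd q β)) (Pmon p q bb)) := fun β => by ring
    rw [Finset.sum_congr rfl fun β _ => this β, ← Finset.mul_sum, euler, mul_smul_comm]
  rw [h1, h2, h3, ← add_smul, ← add_smul]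


lemma Pmon_insertNth (p q q' : ℕ) (μ : Fin (q'+1)) (β : Fin p) (c : Fin q' → Fin p) :
    Pmon p q (Fin.insertNth μ β c)
      = MvPolynomial.X (Fin.castAdd q β) * Pmon p q c := by
  rw [Pmon, Fin.prod_univ_succAbove _ μ]
  simp [Pmon, Fin.insertNth_apply_same, Fin.insertNth_apply_succAbove]

/-- Common normal form for both sides. -/
def NN (p q' ℓ : ℕ) : F p (q'+1) ℓ :=
  ∑ μ : Fin (q'+1), ∑ c : Fin q' → Fin p, ∑ b : Fin ℓ → Fin p,
    ((-1 : ℂ) ^ (μ : ℕ)) •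
      (((MvPolynomial.X (Fin.natAdd p μ) * Pmon p (q'+1) c * Pmon p (q'+1) b)
          ⊗ₜ[ℂ] Wc p q' μ c) ⊗ₜ[ℂ] eB p (q'+1) ℓ b)

/-- Normal form of `h φ_{q,0}` in `P ⊗ E`. -/
def MM (p q' : ℕ) : P p (q'+1) ⊗[ℂ] E p (q'+1) :=
  ∑ μ : Fin (q'+1), ∑ c : Fin q' → Fin p,
    ((-1 : ℂ) ^ (μ : ℕ)) •
      ((MvPolynomial.X (Fin.natAdd p μ) * Pmon p (q'+1) c) ⊗ₜ[ℂ] Wc p q' μ c)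

lemma hOp_tmul (p q ℓ : ℕ) (x : P p q) (y : E p q) (t : T p q ℓ) :
    hOp p q ℓ ((x ⊗ₜ[ℂ] y) ⊗ₜ[ℂ] t)
      = ∑ α : Fin p, ∑ μ : Fin q,
          ((MvPolynomial.X (Fin.natAdd p μ) * (MvPolynomial.pderiv (Fin.castAdd q α)) x)
             ⊗ₜ[ℂ] contr p q α μ y) ⊗ₜ[ℂ] t := by
  simp [hOp, LinearMap.sum_apply, TensorProduct.map_tmul, LinearMap.mulLeft_apply]

lemma hterm (p q' ℓ : ℕ) (a : Fin (q'+1) → Fin p) (b : Fin ℓ → Fin p) :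
    hOp p (q'+1) ℓ (((Pmon p (q'+1) a * Pmon p (q'+1) b) ⊗ₜ[ℂ] Wl p (q'+1) a)
        ⊗ₜ[ℂ] eB p (q'+1) ℓ b)
      = ∑ μ : Fin (q'+1), ((-1 : ℂ) ^ (μ : ℕ)) •
          (((MvPolynomial.X (Fin.natAdd p μ) *
              (MvPolynomial.pderiv (Fin.castAdd (q'+1) (a μ)))
                (Pmon p (q'+1) a * Pmon p (q'+1) b))
             ⊗ₜ[ℂ] Wc p q' μ (fun ν => a (μ.succAbove ν))) ⊗ₜ[ℂ] eB p (q'+1) ℓ b) := by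
  rw [hOp_tmul, Finset.sum_comm]
  refine Finset.sum_congr rfl fun μ _ => ?_
  simp only [contr_Wl, ite_smul, zero_smul, TensorProduct.tmul_ite, TensorProduct.ite_tmul,
    TensorProduct.tmul_zero, TensorProduct.zero_tmul]
  rw [Finset.sum_ite_eq Finset.univ (a μ), if_pos (Finset.mem_univ _)]
  rw [TensorProduct.tmul_smul, TensorProduct.smul_tmul]
  rw [TensorProduct.tmul_smul]


lemma sum_beta (p q' ℓ : ℕ) (μ : Fin (q'+1)) (c : Fin q' → Fin p) (b : Fin ℓ → Fin p) :
    ∑ β : Fin p, ((-1 : ℂ) ^ (μ : ℕ)) •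
        (((MvPolynomial.X (Fin.natAdd p μ) *
            (MvPolynomial.pderiv (Fin.castAdd (q'+1) β))
              (MvPolynomial.X (Fin.castAdd (q'+1) β) * Pmon p (q'+1) c * Pmon p (q'+1) b))
           ⊗ₜ[ℂ] Wc p q' μ c) ⊗ₜ[ℂ] eB p (q'+1) ℓ b)
      = ((p : ℂ) + q' + ℓ) • (((-1 : ℂ) ^ (μ : ℕ)) •
          (((MvPolynomial.X (Fin.natAdd p μ) * Pmon p (q'+1) c * Pmon p (q'+1) b)
             ⊗ₜ[ℂ] Wc p q' μ c) ⊗ₜ[ℂ] eB p (q'+1) ℓ b)) := by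
  rw [← Finset.smul_sum, ← TensorProduct.sum_tmul, ← TensorProduct.sum_tmul,
    ← Finset.mul_sum, keypoly, mul_smul_comm, ← mul_assoc]
  simp [TensorProduct.smul_tmul', smul_comm ((p : ℂ) + q' + ℓ)]

/-- Summand of `h φ_{q,ℓ}` after contraction. -/
def term1 (p q' ℓ : ℕ) (μ : Fin (q'+1)) (a : Fin (q'+1) → Fin p) (b : Fin ℓ → Fin p) :
    F p (q'+1) ℓ :=
  ((-1 : ℂ) ^ (μ : ℕ)) •
    (((MvPolynomial.X (Fin.natAdd p μ) *
        (MvPolynomial.pderiv (Fin.castAdd (q'+1) (a μ)))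
          (Pmon p (q'+1) a * Pmon p (q'+1) b))
       ⊗ₜ[ℂ] Wc p q' μ (fun ν => a (μ.succAbove ν))) ⊗ₜ[ℂ] eB p (q'+1) ℓ b)

/-- Summand of the normal form `NN`. -/
def term2 (p q' ℓ : ℕ) (μ : Fin (q'+1)) (c : Fin q' → Fin p) (b : Fin ℓ → Fin p) :
    F p (q'+1) ℓ :=
  ((-1 : ℂ) ^ (μ : ℕ)) •
    (((MvPolynomial.X (Fin.natAdd p μ) * Pmon p (q'+1) c * Pmon p (q'+1) b)
       ⊗ₜ[ℂ] Wc p q' μ c) ⊗ₜ[ℂ] eB p (q'+1) ℓ b)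

lemma NN_eq (p q' ℓ : ℕ) :
    NN p q' ℓ = ∑ μ : Fin (q'+1), ∑ c : Fin q' → Fin p, ∑ b : Fin ℓ → Fin p,
      term2 p q' ℓ μ c b := rfl

lemma hterm' (p q' ℓ : ℕ) (a : Fin (q'+1) → Fin p) (b : Fin ℓ → Fin p) :
    hOp p (q'+1) ℓ (((Pmon p (q'+1) a * Pmon p (q'+1) b) ⊗ₜ[ℂ] Wl p (q'+1) a)
        ⊗ₜ[ℂ] eB p (q'+1) ℓ b)
      = ∑ μ : Fin (q'+1), term1 p q' ℓ μ a b := hterm p q' ℓ a b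

lemma sum_rot3 {α β γ M : Type*} [Fintype α] [Fintype β] [Fintype γ] [AddCommMonoid M]
    (f : α → β → γ → M) :
    ∑ a : α, ∑ b : β, ∑ c : γ, f a b c = ∑ c : γ, ∑ a : α, ∑ b : β, f a b c := by
  rw [show (∑ a : α, ∑ b : β, ∑ c : γ, f a b c) = ∑ a : α, ∑ c : γ, ∑ b : β, f a b c from
    Finset.sum_congr rfl fun a _ => Finset.sum_comm]
  exact Finset.sum_comm

lemma La (p q' ℓ : ℕ) (μ : Fin (q'+1)) (b : Fin ℓ → Fin p) :
    ∑ a : Fin (q'+1) → Fin p, term1 p q' ℓ μ a b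
      = ((p : ℂ) + q' + ℓ) • ∑ c : Fin q' → Fin p, term2 p q' ℓ μ c b := by
  rw [← Equiv.sum_comp (Fin.insertNthEquiv (fun _ => Fin p) μ)
    (fun a => term1 p q' ℓ μ a b), Fintype.sum_prod_type, Finset.sum_comm, Finset.smul_sum]
  refine Finset.sum_congr rfl fun c _ => ?_
  have : ∀ β : Fin p, term1 p q' ℓ μ (Fin.insertNthEquiv (fun _ => Fin p) μ (β, c)) b
      = ((-1 : ℂ) ^ (μ : ℕ)) •
        (((MvPolynomial.X (Fin.natAdd p μ) *
            (MvPolynomial.pderiv (Fin.castAdd (q'+1) β))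
              (MvPolynomial.X (Fin.castAdd (q'+1) β) * Pmon p (q'+1) c * Pmon p (q'+1) b))
           ⊗ₜ[ℂ] Wc p q' μ c) ⊗ₜ[ℂ] eB p (q'+1) ℓ b) := by
    intro β
    rw [term1]
    have hins : (Fin.insertNthEquiv (fun _ => Fin p) μ) (β, c) = Fin.insertNth μ β c := rfl
    rw [hins]
    simp only [Fin.insertNth_apply_same, Fin.insertNth_apply_succAbove, Pmon_insertNth]
  rw [Finset.sum_congr rfl fun β _ => this β, sum_beta p q' ℓ μ c b, term2]

lemma bigsum (p q' ℓ : ℕ) :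
    (∑ a : Fin (q'+1) → Fin p, ∑ b : Fin ℓ → Fin p, ∑ μ : Fin (q'+1), term1 p q' ℓ μ a b)
      = ((p : ℂ) + q' + ℓ) • NN p q' ℓ := by
  rw [sum_rot3 (fun a b μ => term1 p q' ℓ μ a b), NN_eq, Finset.smul_sum]
  refine Finset.sum_congr rfl fun μ _ => ?_
  rw [Finset.sum_comm]
  refine Eq.trans (Finset.sum_congr rfl fun b _ => La p q' ℓ μ b) ?_
  rw [← Finset.smul_sum]
  exact congrArg _ Finset.sum_comm

lemma claim1 (p q' ℓ : ℕ) :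
    hOp p (q'+1) ℓ (phi p (q'+1) ℓ)
      = (((2 : ℂ) ^ ((((q'+1 : ℕ)) : ℂ) / 2)
            * (-Complex.I / (4 * (Real.pi : ℂ))) ^ ((q'+1) + ℓ))
          * ((p : ℂ) + q' + ℓ)) • NN p q' ℓ := by
  have hphi : phi p (q'+1) ℓ
      = ((2 : ℂ) ^ ((((q'+1 : ℕ)) : ℂ) / 2)
            * (-Complex.I / (4 * (Real.pi : ℂ))) ^ ((q'+1) + ℓ)) •
        ∑ a : Fin (q'+1) → Fin p, ∑ b : Fin ℓ → Fin p,
          ((Pmon p (q'+1) a * Pmon p (q'+1) b) ⊗ₜ[ℂ] Wl p (q'+1) a)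
            ⊗ₜ[ℂ] eB p (q'+1) ℓ b := rfl
  rw [hphi, map_smul, map_sum]
  simp only [map_sum, hterm']
  rw [bigsum, smul_smul]


lemma keypoly0 (p q : ℕ) {m : ℕ} (c : Fin m → Fin p) :
    ∑ β : Fin p, (MvPolynomial.pderiv (Fin.castAdd q β))
        (MvPolynomial.X (Fin.castAdd q β) * Pmon p q c)
      = ((p : ℂ) + m) • Pmon p q c := by
  simp only [MvPolynomial.pderiv_mul, MvPolynomial.pderiv_X_self, one_mul]
  rw [Finset.sum_add_distrib]
  have h1 : ∑ _β : Fin p, Pmon p q c = (p : ℂ) • Pmon p q c := by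
    rw [Finset.sum_const, Finset.card_univ, Fintype.card_fin, Nat.cast_smul_eq_nsmul]
  rw [h1, euler, ← add_smul]

/-- Summand of `h φ_{q,0}` after contraction. -/
def term1' (p q' : ℕ) (μ : Fin (q'+1)) (a : Fin (q'+1) → Fin p) :
    P p (q'+1) ⊗[ℂ] E p (q'+1) :=
  ((-1 : ℂ) ^ (μ : ℕ)) •
    ((MvPolynomial.X (Fin.natAdd p μ) *
        (MvPolynomial.pderiv (Fin.castAdd (q'+1) (a μ))) (Pmon p (q'+1) a))
       ⊗ₜ[ℂ] Wc p q' μ (fun ν => a (μ.succAbove ν)))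

/-- Summand of `MM`. -/
def term2' (p q' : ℕ) (μ : Fin (q'+1)) (c : Fin q' → Fin p) :
    P p (q'+1) ⊗[ℂ] E p (q'+1) :=
  ((-1 : ℂ) ^ (μ : ℕ)) •
    ((MvPolynomial.X (Fin.natAdd p μ) * Pmon p (q'+1) c) ⊗ₜ[ℂ] Wc p q' μ c)

lemma MM_eq (p q' : ℕ) :
    MM p q' = ∑ μ : Fin (q'+1), ∑ c : Fin q' → Fin p, term2' p q' μ c := rfl

lemma hterm0 (p q' : ℕ) (a : Fin (q'+1) → Fin p) :
    hOp' p (q'+1) (Pmon p (q'+1) a ⊗ₜ[ℂ] Wl p (q'+1) a)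
      = ∑ μ : Fin (q'+1), term1' p q' μ a := by
  have h : hOp' p (q'+1) (Pmon p (q'+1) a ⊗ₜ[ℂ] Wl p (q'+1) a)
      = ∑ α : Fin p, ∑ μ : Fin (q'+1),
          (MvPolynomial.X (Fin.natAdd p μ) *
            (MvPolynomial.pderiv (Fin.castAdd (q'+1) α)) (Pmon p (q'+1) a))
            ⊗ₜ[ℂ] contr p (q'+1) α μ (Wl p (q'+1) a) := by
    simp [hOp', LinearMap.sum_apply, TensorProduct.map_tmul, LinearMap.mulLeft_apply]
  rw [h, Finset.sum_comm]
  refine Finset.sum_congr rfl fun μ _ => ?_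
  simp only [contr_Wl, ite_smul, zero_smul, TensorProduct.tmul_ite, TensorProduct.tmul_zero]
  rw [Finset.sum_ite_eq Finset.univ (a μ), if_pos (Finset.mem_univ _)]
  rw [term1', TensorProduct.tmul_smul]

lemma sum_beta0 (p q' : ℕ) (μ : Fin (q'+1)) (c : Fin q' → Fin p) :
    ∑ β : Fin p, ((-1 : ℂ) ^ (μ : ℕ)) •
        ((MvPolynomial.X (Fin.natAdd p μ) *
            (MvPolynomial.pderiv (Fin.castAdd (q'+1) β))
              (MvPolynomial.X (Fin.castAdd (q'+1) β) * Pmon p (q'+1) c))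
           ⊗ₜ[ℂ] Wc p q' μ c)
      = ((p : ℂ) + q') • term2' p q' μ c := by
  rw [← Finset.smul_sum, ← TensorProduct.sum_tmul, ← Finset.mul_sum, keypoly0,
    mul_smul_comm, term2']
  simp [TensorProduct.smul_tmul', smul_comm ((p : ℂ) + q')]

lemma La0 (p q' : ℕ) (μ : Fin (q'+1)) :
    ∑ a : Fin (q'+1) → Fin p, term1' p q' μ a
      = ((p : ℂ) + q') • ∑ c : Fin q' → Fin p, term2' p q' μ c := by
  rw [← Equiv.sum_comp (Fin.insertNthEquiv (fun _ => Fin p) μ)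
    (fun a => term1' p q' μ a), Fintype.sum_prod_type, Finset.sum_comm, Finset.smul_sum]
  refine Finset.sum_congr rfl fun c _ => ?_
  have : ∀ β : Fin p, term1' p q' μ (Fin.insertNthEquiv (fun _ => Fin p) μ (β, c))
      = ((-1 : ℂ) ^ (μ : ℕ)) •
        ((MvPolynomial.X (Fin.natAdd p μ) *
            (MvPolynomial.pderiv (Fin.castAdd (q'+1) β))
              (MvPolynomial.X (Fin.castAdd (q'+1) β) * Pmon p (q'+1) c))
           ⊗ₜ[ℂ] Wc p q' μ c) := by
    intro β
    rw [term1']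
    have hins : (Fin.insertNthEquiv (fun _ => Fin p) μ) (β, c) = Fin.insertNth μ β c := rfl
    rw [hins]
    simp only [Fin.insertNth_apply_same, Fin.insertNth_apply_succAbove, Pmon_insertNth]
  rw [Finset.sum_congr rfl fun β _ => this β, sum_beta0 p q' μ c]

lemma claim2a (p q' : ℕ) :
    hOp' p (q'+1) (phiQ0' p (q'+1))
      = (((2 : ℂ) ^ ((((q'+1 : ℕ)) : ℂ) / 2)
            * (-Complex.I / (4 * (Real.pi : ℂ))) ^ (q'+1))
          * ((p : ℂ) + q')) • MM p q' := by
  have hphi : phiQ0' p (q'+1)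
      = ((2 : ℂ) ^ ((((q'+1 : ℕ)) : ℂ) / 2)
            * (-Complex.I / (4 * (Real.pi : ℂ))) ^ (q'+1)) •
        ∑ a : Fin (q'+1) → Fin p, Pmon p (q'+1) a ⊗ₜ[ℂ] Wl p (q'+1) a := rfl
  rw [hphi, map_smul, map_sum]
  simp only [hterm0]
  rw [Finset.sum_comm, Finset.sum_congr rfl fun μ _ => La0 p q' μ,
    ← Finset.smul_sum, smul_smul, MM_eq]

lemma claim2b (p q' ℓ : ℕ) :
    (LinearMap.rTensor (T p (q'+1) ℓ) (LinearMap.mulLeft ℂ (MM p q')))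
        (phi0 p (q'+1) ℓ)
      = ((-Complex.I / (4 * (Real.pi : ℂ))) ^ ℓ) • NN p q' ℓ := by
  have hphi0 : phi0 p (q'+1) ℓ
      = ((-Complex.I / (4 * (Real.pi : ℂ))) ^ ℓ) •
        ∑ b : Fin ℓ → Fin p,
          (Pmon p (q'+1) b ⊗ₜ[ℂ] (1 : E p (q'+1))) ⊗ₜ[ℂ] eB p (q'+1) ℓ b := rfl
  rw [hphi0, map_smul, map_sum]
  have hb : ∀ b : Fin ℓ → Fin p,
      (LinearMap.rTensor (T p (q'+1) ℓ) (LinearMap.mulLeft ℂ (MM p q')))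
          ((Pmon p (q'+1) b ⊗ₜ[ℂ] (1 : E p (q'+1))) ⊗ₜ[ℂ] eB p (q'+1) ℓ b)
        = ∑ μ : Fin (q'+1), ∑ c : Fin q' → Fin p, term2 p q' ℓ μ c b := by
    intro b
    rw [LinearMap.rTensor_tmul, LinearMap.mulLeft_apply, MM_eq, Finset.sum_mul,
      TensorProduct.sum_tmul]
    refine Finset.sum_congr rfl fun μ _ => ?_
    rw [Finset.sum_mul, TensorProduct.sum_tmul]
    refine Finset.sum_congr rfl fun c _ => ?_
    rw [term2', term2, smul_mul_assoc, Algebra.TensorProduct.tmul_mul_tmul, mul_one,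
      ← TensorProduct.smul_tmul']

  rw [Finset.sum_congr rfl fun b _ => hb b, NN_eq,
    ← sum_rot3 (fun μ c b => term2 p q' ℓ μ c b)]

set_option synthInstance.maxHeartbeats 400000 in
/-- **Lemma (newdef):** `(p+q−1) · (h φ_{q,ℓ}) = (p+q+ℓ−1) · ((h φ_{q,0}) · φ_{0,ℓ})`,
where the product on the right multiplies the polynomial factors, wedges the
exterior-algebra factors, and retains the tensor factor.  Equivalently,
`ψ_{q,ℓ} = (−1/(2(p+q−1))) (h φ_{q,0}) · φ_{0,ℓ}` equals `(−1/(2(p+q+ℓ−1))) h φ_{q,ℓ}`. -/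
theorem hphi_eq (p q ℓ : ℕ) (hp : 1 ≤ p) (hq : 1 ≤ q) :
    ((p : ℂ) + q - 1) • hOp p q ℓ (phi p q ℓ)
      = ((p : ℂ) + q + ℓ - 1) •
          (LinearMap.rTensor (T p q ℓ)
              (LinearMap.mulLeft ℂ (hOp' p q (phiQ0' p q))))
            (phi0 p q ℓ) := by
  obtain ⟨q', rfl⟩ : ∃ q', q = q' + 1 := ⟨q - 1, (Nat.succ_pred_eq_of_pos hq).symm⟩
  rw [claim1, claim2a]
  have hml : LinearMap.mulLeft ℂ
        ((((2 : ℂ) ^ ((((q'+1 : ℕ)) : ℂ) / 2)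
            * (-Complex.I / (4 * (Real.pi : ℂ))) ^ (q'+1))
          * ((p : ℂ) + q')) • MM p q')
      = (((2 : ℂ) ^ ((((q'+1 : ℕ)) : ℂ) / 2)
            * (-Complex.I / (4 * (Real.pi : ℂ))) ^ (q'+1))
          * ((p : ℂ) + q')) • LinearMap.mulLeft ℂ (MM p q') := by
    refine LinearMap.ext fun x => ?_
    simp only [LinearMap.mulLeft_apply, LinearMap.smul_apply]
    exact smul_mul_assoc _ _ _
  rw [hml, LinearMap.rTensor_smul, LinearMap.smul_apply, claim2b]
  simp only [smul_smul]
  congr 1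
  push_cast
  ring

end FockModel
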